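/- Let H be a real separable Hilbert space and let E be a real Banach space equipped with its Borel σ-algebra and a σ-finite measure F; define supp(F) := {x ∈ E : F(B_ε(x)) > 0 for every ε > 0}, where B_ε(x) := {ξ ∈ E : ‖ξ − x‖ < ε}. Let M ⊆ H be nonempty and h ∈ M, and suppose there exist an open set U ⊆ H with h ∈ U, an integer m ≥ 1, a set V ⊆ ℝ^m_+ open in ℝ^m_+, and a homeomorphism φ : V → U ∩ M which is the restriction of a continuously Fréchet differentiable map φ : ℝ^m → H with Dφ(y') injective for every y' ∈ V, together with a continuously Fréchet differentiable map Φ : H → ℝ^m satisfying Φ(φ(y')) = y' for all y' ∈ V. Set y := Φ(h), T_hM := Dφ(y)(ℝ^m), (T_hM)_+ := Dφ(y)(ℝ^m_+), and T_h∂M := Dφ(y)({w ∈ ℝ^m : w₁ = 0}). Let δ : E → H be continuous on a neighborhood of a point x₀ ∈ E and Fréchet differentiable at x₀ with δ(x₀) = 0, and suppose h + δ(x) ∈ closure(M) for F-almost all x ∈ E. Let v ∈ E with v ≠ 0. Then: (1) if there is a sequence (t_n) ⊂ (0,∞) with t_n → 0 such that {x₀ + t_n v : n ∈ ℕ} ⊆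 supp(F) or {x₀ − t_n v : n ∈ ℕ} ⊆ supp(F), then Dδ(x₀)(v) ∈ T_hM; (2) if in addition y ∈ ∂V (i.e. y₁ = 0) and there is a sequence (t_n) ⊂ (0,∞) with t_n → 0 such that {x₀ + t_n v : n ∈ ℕ} ⊆ supp(F), then Dδ(x₀)(v) ∈ (T_hM)_+; (3) if y ∈ ∂V and there are sequences (t_n), (s_n) ⊂ (0,∞) with t_n, s_n → 0 such that {x₀ + t_n v : n ∈ ℕ} ⊆ supp(F) and {x₀ − s_n v : n ∈ ℕ} ⊆ supp(F), then Dδ(x₀)(v) ∈ T_h∂M. -/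

import Mathlib

open MeasureTheory Filter
open scoped ENNReal Topology

/-- sequential chain rule: if `aₙ → x` and `(aₙ - x)/tₙ → u` then `(f aₙ - f x)/tₙ → f' u`. -/
lemma seq_fderiv {X Y : Type*} [NormedAddCommGroup X] [NormedSpace ℝ X]
    [NormedAddCommGroup Y] [NormedSpace ℝ Y] {f : X → Y} {f' : X →L[ℝ] Y} {x : X}
    (hf : HasFDerivAt f f' x) {a : ℕ → X} {t : ℕ → ℝ}
    (ha : Tendsto a atTop (𝓝 x)) {u : X}
    (hu : Tendsto (fun n => (t n)⁻¹ • (a n - x)) atTop (𝓝 u)) :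
    Tendsto (fun n => (t n)⁻¹ • (f (a n) - f x)) atTop (𝓝 (f' u)) := by
  have hlo := hf.isLittleO.comp_tendsto ha
  have hC : ∀ᶠ n in atTop, ‖(t n)⁻¹ • (a n - x)‖ ≤ ‖u‖ + 1 := by
    filter_upwards [hu.norm.eventually_lt_const (show ‖u‖ < ‖u‖ + 1 by linarith)] with n hn
    exact hn.le
  have h1 : Tendsto (fun n => (t n)⁻¹ • (f (a n) - f x - f' (a n - x))) atTop (𝓝 0) := by
    rw [NormedAddCommGroup.tendsto_nhds_zero]
    intro ε hε
    have hc : (0:ℝ) < ε / (2 * (‖u‖ + 1)) := by positivity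
    filter_upwards [hlo.def hc, hC] with n h1 h2
    have hb : ‖(t n)⁻¹ • (f (a n) - f x - f' (a n - x))‖
        ≤ ε / (2 * (‖u‖ + 1)) * ‖(t n)⁻¹ • (a n - x)‖ := by
      rw [norm_smul, norm_smul]
      calc ‖(t n)⁻¹‖ * ‖f (a n) - f x - f' (a n - x)‖
          ≤ ‖(t n)⁻¹‖ * (ε / (2 * (‖u‖ + 1)) * ‖a n - x‖) := by
            gcongr; exact h1
        _ = ε / (2 * (‖u‖ + 1)) * (‖(t n)⁻¹‖ * ‖a n - x‖) := by ring
    have : ε / (2 * (‖u‖ + 1)) * ‖(t n)⁻¹ • (a n - x)‖ ≤ ε / (2 * (‖u‖ + 1)) * (‖u‖ + 1) := by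
      gcongr
    have hlt : ε / (2 * (‖u‖ + 1)) * (‖u‖ + 1) < ε := by
      have h2 : (0:ℝ) < ‖u‖ + 1 := by positivity
      rw [div_mul_eq_mul_div, mul_comm 2 (‖u‖+1), ← div_div, mul_div_assoc, div_self h2.ne']
      linarith
    linarith
  have h2 : Tendsto (fun n => f' ((t n)⁻¹ • (a n - x))) atTop (𝓝 (f' u)) :=
    (f'.continuous.tendsto u).comp hu
  have := h1.add h2
  rw [zero_add] at this
  refine this.congr fun n => ?_
  rw [smul_sub, smul_sub, f'.map_smul]
  abel

lemma mem_closure_inter_open {X : Type*} [TopologicalSpace X] {M U : Set X} (hU : IsOpen U)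
    {a : X} (haU : a ∈ U) (haM : a ∈ closure M) : a ∈ closure (U ∩ M) := by
  rw [mem_closure_iff] at haM ⊢
  intro o ho hao
  obtain ⟨b, hb, hbM⟩ := haM (o ∩ U) (ho.inter hU) ⟨hao, haU⟩
  exact ⟨b, hb.1, hb.2, hbM⟩

lemma key_lemma {H E : Type*}
    [NormedAddCommGroup H] [NormedSpace ℝ H]
    [NormedAddCommGroup E] [NormedSpace ℝ E] [MeasurableSpace E]
    (F : Measure E) (M : Set H) (h : H) (hhM : h ∈ M)
    (U : Set H) (hU : IsOpen U) (hhU : h ∈ U)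
    {m : ℕ} [NeZero m] (V : Set (EuclideanSpace ℝ (Fin m)))
    (hVpos : V ⊆ {y | 0 ≤ y 0})
    (φ : EuclideanSpace ℝ (Fin m) → H) (hφC1 : ContDiff ℝ 1 φ)
    (hφbij : Set.BijOn φ V (U ∩ M))
    (Φ : H → EuclideanSpace ℝ (Fin m)) (hΦC1 : ContDiff ℝ 1 Φ)
    (hΦφ : ∀ y' ∈ V, Φ (φ y') = y')
    (δ : E → H) (x₀ : E)
    (hδcont : ∃ W : Set E, IsOpen W ∧ x₀ ∈ W ∧ ContinuousOn δ W)
    (hδdiff : DifferentiableAt ℝ δ x₀) (hδ0 : δ x₀ = 0)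
    (hjump : ∀ᵐ x ∂F, h + δ x ∈ closure M)
    (v : E) (t : ℕ → ℝ) (ht0 : ∀ n, 0 < t n) (htlim : Tendsto t atTop (𝓝 0))
    (hsupp : ∀ n, ∀ ε : ℝ, 0 < ε → 0 < F (Metric.ball (x₀ + t n • v) ε)) :
    fderiv ℝ δ x₀ v = fderiv ℝ φ (Φ h) (fderiv ℝ Φ h (fderiv ℝ δ x₀ v)) ∧
    ((Φ h) 0 = 0 → 0 ≤ (fderiv ℝ Φ h (fderiv ℝ δ x₀ v)) 0) := by
  classical
  obtain ⟨W, hWopen, hx₀W, hδW⟩ := hδcont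
  set x : ℕ → E := fun n => x₀ + t n • v with hxdef
  set L : H := fderiv ℝ δ x₀ v with hLdef
  have hxlim : Tendsto x atTop (𝓝 x₀) := by
    have : Tendsto (fun n => x₀ + t n • v) atTop (𝓝 (x₀ + (0:ℝ) • v)) :=
      tendsto_const_nhds.add (htlim.smul_const v)
    simpa using this
  -- a.e. jump set has null complement
  have hAc : F {x | ¬ (h + δ x ∈ closure M)} = 0 := ae_iff.mp hjump
  -- Step A : eventually h + δ (x n) ∈ closure M
  have hAcl : ∀ᶠ n in atTop, h + δ (x n) ∈ closure M := by
    filter_upwards [hxlim.eventually (hWopen.mem_nhds hx₀W)] with n hxW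
    have hxcl : x n ∈ closure ({x | h + δ x ∈ closure M} ∩ W) := by
      rw [Metric.mem_closure_iff]
      intro ε hε
      obtain ⟨ε', hε', hball⟩ := Metric.isOpen_iff.mp hWopen _ hxW
      have hεε : (0:ℝ) < min ε ε' := lt_min hε hε'
      have hne : (Metric.ball (x n) (min ε ε') ∩ {x | h + δ x ∈ closure M}).Nonempty := by
        rw [Set.nonempty_iff_ne_empty]
        intro he
        refine (hsupp n _ hεε).ne' (measure_mono_null ?_ hAc)
        intro ξ hξ
        simp only [Set.mem_setOf_eq]
        intro hA
        exact absurd (Set.mem_inter hξ hA) (by rw [he]; exact Set.notMem_empty ξ)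
      obtain ⟨ξ, hξball, hξA⟩ := hne
      refine ⟨ξ, ⟨hξA, hball (Metric.ball_subset_ball (min_le_right ε ε') hξball)⟩, ?_⟩
      rw [dist_comm]
      exact lt_of_lt_of_le hξball (min_le_left ε ε')
    obtain ⟨ξ, hξmem, hξlim⟩ := mem_closure_iff_seq_limit.mp hxcl
    have hcont : ContinuousAt δ (x n) := hδW.continuousAt (hWopen.mem_nhds hxW)
    have hlim2 : Tendsto (fun k => h + δ (ξ k)) atTop (𝓝 (h + δ (x n))) :=
      tendsto_const_nhds.add ((hcont.tendsto).comp hξlim)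
    exact isClosed_closure.mem_of_tendsto hlim2 (Eventually.of_forall fun k => (hξmem k).1)
  -- δ (x n) → 0
  have hδlim : Tendsto (fun n => δ (x n)) atTop (𝓝 0) := by
    have hcont : ContinuousAt δ x₀ := hδW.continuousAt (hWopen.mem_nhds hx₀W)
    have := (hcont.tendsto).comp hxlim
    rwa [hδ0] at this
  have hglim0 : Tendsto (fun n => h + δ (x n)) atTop (𝓝 h) := by
    have := (tendsto_const_nhds : Tendsto (fun _ : ℕ => h) atTop (𝓝 h)).add hδlim
    simpa using this
  have hUev : ∀ᶠ n in atTop, h + δ (x n) ∈ U := hglim0.eventually (hU.mem_nhds hhU)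
  -- Step B : choose approximating points in U ∩ M
  have hP : ∀ᶠ n in atTop, ∃ g, g ∈ U ∩ M ∧ dist (h + δ (x n)) g < t n ^ 2 := by
    filter_upwards [hAcl, hUev] with n h1 h2
    have h3 : h + δ (x n) ∈ closure (U ∩ M) := by
      have := mem_closure_inter_open hU h2 h1
      exact this
    have := Metric.mem_closure_iff.mp h3 (t n ^ 2) (pow_pos (ht0 n) 2)
    obtain ⟨b, hb, hbd⟩ := this
    exact ⟨b, hb, hbd⟩
  set g : ℕ → H := fun n =>
    if hn : ∃ g, g ∈ U ∩ M ∧ dist (h + δ (x n)) g < t n ^ 2 then hn.choose else h with hgdef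
  have hg : ∀ᶠ n in atTop, g n ∈ U ∩ M ∧ dist (h + δ (x n)) (g n) < t n ^ 2 := by
    filter_upwards [hP] with n hn
    simp only [hgdef, dif_pos hn]
    exact hn.choose_spec
  -- Step C : uₙ := (g n - h)/tₙ → L
  have hud : Tendsto (fun n => (t n)⁻¹ • δ (x n)) atTop (𝓝 L) := by
    have htpos : Tendsto (fun n => ‖(t n)⁻¹‖) atTop atTop := by
      have h1 : Tendsto t atTop (𝓝[>] 0) :=
        tendsto_nhdsWithin_of_tendsto_nhds_of_eventually_within _ htlim
          (Eventually.of_forall fun n => ht0 n)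
      have h2 := tendsto_inv_nhdsGT_zero.comp h1
      refine h2.congr fun n => ?_
      rw [Real.norm_eq_abs, abs_of_pos (inv_pos.mpr (ht0 n))]
      rfl
    have := hδdiff.hasFDerivAt.lim v htpos
    refine this.congr fun n => ?_
    rw [inv_inv, hδ0, sub_zero]
  have hbound : ∀ᶠ n in atTop,
      ‖(t n)⁻¹ • (g n - h) - (t n)⁻¹ • δ (x n)‖ ≤ t n := by
    filter_upwards [hg] with n hn
    have : (t n)⁻¹ • (g n - h) - (t n)⁻¹ • δ (x n) = (t n)⁻¹ • (g n - (h + δ (x n))) := by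
      rw [← smul_sub]; congr 1; abel
    rw [this, norm_smul, Real.norm_eq_abs, abs_of_pos (inv_pos.mpr (ht0 n))]
    have h2 : ‖g n - (h + δ (x n))‖ < t n ^ 2 := by
      rw [← dist_eq_norm, dist_comm]; exact hn.2
    have h3 : (t n)⁻¹ * ‖g n - (h + δ (x n))‖ ≤ (t n)⁻¹ * t n ^ 2 :=
      mul_le_mul_of_nonneg_left h2.le (inv_pos.mpr (ht0 n)).le
    have h4 : (t n)⁻¹ * t n ^ 2 = t n := by
      rw [pow_two, ← mul_assoc, inv_mul_cancel₀ (ht0 n).ne', one_mul]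
    linarith
  have hu : Tendsto (fun n => (t n)⁻¹ • (g n - h)) atTop (𝓝 L) := by
    have hzero : Tendsto (fun n => (t n)⁻¹ • (g n - h) - (t n)⁻¹ • δ (x n)) atTop (𝓝 0) :=
      squeeze_zero_norm' hbound htlim
    have := hzero.add hud
    rw [zero_add] at this
    exact this.congr fun n => by abel
  -- g n → h
  have hglim : Tendsto g atTop (𝓝 h) := by
    have hb2 : ∀ᶠ n in atTop, ‖g n - (h + δ (x n))‖ ≤ t n ^ 2 := by
      filter_upwards [hg] with n hn
      rw [← dist_eq_norm, dist_comm]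
      exact hn.2.le
    have hz : Tendsto (fun n => g n - (h + δ (x n))) atTop (𝓝 0) :=
      squeeze_zero_norm' hb2 (by simpa using htlim.pow 2)
    have := hz.add hglim0
    rw [zero_add] at this
    exact this.congr fun n => by abel
  -- chart facts
  obtain ⟨z, hzV, hzφ⟩ := hφbij.surjOn ⟨hhU, hhM⟩
  have hyV : Φ h ∈ V := by rw [← hzφ, hΦφ z hzV]; exact hzV
  have hφy : φ (Φ h) = h := by rw [← hzφ, hΦφ z hzV]
  have hgy : ∀ᶠ n in atTop, Φ (g n) ∈ V ∧ φ (Φ (g n)) = g n := by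
    filter_upwards [hg] with n hn
    obtain ⟨z', hz'V, hz'φ⟩ := hφbij.surjOn hn.1
    constructor
    · rw [← hz'φ, hΦφ z' hz'V]; exact hz'V
    · rw [← hz'φ, hΦφ z' hz'V]
  -- Step E : wₙ := (Φ(g n) - Φ h)/tₙ → w
  set w : EuclideanSpace ℝ (Fin m) := fderiv ℝ Φ h L with hwdef
  have hΦd : HasFDerivAt Φ (fderiv ℝ Φ h) h :=
    ((hΦC1.differentiable one_ne_zero) h).hasFDerivAt
  have hw : Tendsto (fun n => (t n)⁻¹ • (Φ (g n) - Φ h)) atTop (𝓝 w) :=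
    seq_fderiv hΦd hglim hu
  -- Step F : back through φ
  have hφd : HasFDerivAt φ (fderiv ℝ φ (Φ h)) (Φ h) :=
    ((hφC1.differentiable one_ne_zero) (Φ h)).hasFDerivAt
  have hΦglim : Tendsto (fun n => Φ (g n)) atTop (𝓝 (Φ h)) :=
    ((hΦC1.continuous.tendsto h).comp hglim)
  have hback : Tendsto (fun n => (t n)⁻¹ • (φ (Φ (g n)) - φ (Φ h))) atTop
      (𝓝 (fderiv ℝ φ (Φ h) w)) := seq_fderiv hφd hΦglim hw
  have hback' : Tendsto (fun n => (t n)⁻¹ • (g n - h)) atTop (𝓝 (fderiv ℝ φ (Φ h) w)) := by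
    refine hback.congr' ?_
    filter_upwards [hgy] with n hn
    rw [hn.2, hφy]
  have hmain : L = fderiv ℝ φ (Φ h) w := tendsto_nhds_unique hu hback'
  refine ⟨hmain, fun hy0 => ?_⟩
  -- sign condition
  have heval : Tendsto (fun n => ((t n)⁻¹ • (Φ (g n) - Φ h)) 0) atTop (𝓝 (w 0)) :=
    ((EuclideanSpace.proj (0 : Fin m) : EuclideanSpace ℝ (Fin m) →L[ℝ] ℝ).continuous.tendsto w).comp hw
  refine ge_of_tendsto heval ?_
  filter_upwards [hgy] with n hn
  have h1 : ((t n)⁻¹ • (Φ (g n) - Φ h)) 0 = (t n)⁻¹ * ((Φ (g n)) 0 - (Φ h) 0) := rfl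
  rw [h1, hy0, sub_zero]
  have h2 : 0 ≤ (Φ (g n)) 0 := hVpos hn.1
  exact mul_nonneg (inv_pos.mpr (ht0 n)).le h2

theorem stmt_18
    {H E : Type*}
    [NormedAddCommGroup H] [InnerProductSpace ℝ H] [CompleteSpace H]
    [TopologicalSpace.SeparableSpace H]
    [NormedAddCommGroup E] [NormedSpace ℝ E]
    [MeasurableSpace E] [BorelSpace E]
    (F : Measure E) [SigmaFinite F]
    (M : Set H) (hMne : M.Nonempty) (h : H) (hhM : h ∈ M)
    (U : Set H) (hU : IsOpen U) (hhU : h ∈ U)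
    (m : ℕ) [NeZero m] (hm : 1 ≤ m)
    (V : Set (EuclideanSpace ℝ (Fin m)))
    (hV : ∃ Vt : Set (EuclideanSpace ℝ (Fin m)), IsOpen Vt ∧
      Vt ∩ {y : EuclideanSpace ℝ (Fin m) | 0 ≤ y 0} = V)
    (φ : EuclideanSpace ℝ (Fin m) → H)
    (hφC1 : ContDiff ℝ 1 φ)
    (hφbij : Set.BijOn φ V (U ∩ M))
    (hφinj : ∀ y' ∈ V, Function.Injective (fderiv ℝ φ y'))
    (Φ : H → EuclideanSpace ℝ (Fin m))
    (hΦC1 : ContDiff ℝ 1 Φ)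
    (hΦφ : ∀ y' ∈ V, Φ (φ y') = y')
    (δ : E → H) (x₀ : E)
    (hδcont : ∃ W : Set E, IsOpen W ∧ x₀ ∈ W ∧ ContinuousOn δ W)
    (hδdiff : DifferentiableAt ℝ δ x₀)
    (hδ0 : δ x₀ = 0)
    (hjump : ∀ᵐ x ∂F, h + δ x ∈ closure M)
    (v : E) (hv : v ≠ 0) :
    -- (1)
    ((∃ t : ℕ → ℝ, (∀ n, 0 < t n) ∧ Tendsto t atTop (nhds 0) ∧
        ((∀ n, x₀ + t n • v ∈ {x : E | ∀ ε : ℝ, 0 < ε → 0 < F (Metric.ball x ε)}) ∨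
         (∀ n, x₀ - t n • v ∈ {x : E | ∀ ε : ℝ, 0 < ε → 0 < F (Metric.ball x ε)}))) →
      fderiv ℝ δ x₀ v ∈ Set.range (fderiv ℝ φ (Φ h))) ∧
    -- (2)
    ((Φ h) 0 = 0 →
      (∃ t : ℕ → ℝ, (∀ n, 0 < t n) ∧ Tendsto t atTop (nhds 0) ∧
        ∀ n, x₀ + t n • v ∈ {x : E | ∀ ε : ℝ, 0 < ε → 0 < F (Metric.ball x ε)}) →
      fderiv ℝ δ x₀ v ∈
        ⇑(fderiv ℝ φ (Φ h)) '' {w : EuclideanSpace ℝ (Fin m) | 0 ≤ w 0}) ∧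
    -- (3)
    ((Φ h) 0 = 0 →
      (∃ t s : ℕ → ℝ, (∀ n, 0 < t n) ∧ (∀ n, 0 < s n) ∧
        Tendsto t atTop (nhds 0) ∧ Tendsto s atTop (nhds 0) ∧
        (∀ n, x₀ + t n • v ∈ {x : E | ∀ ε : ℝ, 0 < ε → 0 < F (Metric.ball x ε)}) ∧
        (∀ n, x₀ - s n • v ∈ {x : E | ∀ ε : ℝ, 0 < ε → 0 < F (Metric.ball x ε)})) →
      fderiv ℝ δ x₀ v ∈
        ⇑(fderiv ℝ φ (Φ h)) '' {w : EuclideanSpace ℝ (Fin m) | w 0 = 0}) := by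
  obtain ⟨Vt, hVtopen, hVteq⟩ := hV
  have hVpos : V ⊆ {y | 0 ≤ y 0} := by rw [← hVteq]; exact Set.inter_subset_right
  have keyP : ∀ (t : ℕ → ℝ), (∀ n, 0 < t n) → Tendsto t atTop (𝓝 0) →
      (∀ n, ∀ ε : ℝ, 0 < ε → 0 < F (Metric.ball (x₀ + t n • v) ε)) →
      (fderiv ℝ δ x₀ v = fderiv ℝ φ (Φ h) (fderiv ℝ Φ h (fderiv ℝ δ x₀ v)) ∧
        ((Φ h) 0 = 0 → 0 ≤ (fderiv ℝ Φ h (fderiv ℝ δ x₀ v)) 0)) :=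
    fun t h1 h2 h3 => key_lemma F M h hhM U hU hhU V hVpos φ hφC1 hφbij Φ hΦC1 hΦφ
      δ x₀ hδcont hδdiff hδ0 hjump v t h1 h2 h3
  have keyN : ∀ (s : ℕ → ℝ), (∀ n, 0 < s n) → Tendsto s atTop (𝓝 0) →
      (∀ n, ∀ ε : ℝ, 0 < ε → 0 < F (Metric.ball (x₀ - s n • v) ε)) →
      (fderiv ℝ δ x₀ (-v) = fderiv ℝ φ (Φ h) (fderiv ℝ Φ h (fderiv ℝ δ x₀ (-v))) ∧
        ((Φ h) 0 = 0 → 0 ≤ (fderiv ℝ Φ h (fderiv ℝ δ x₀ (-v))) 0)) := by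
    intro s h1 h2 h3
    refine key_lemma F M h hhM U hU hhU V hVpos φ hφC1 hφbij Φ hΦC1 hΦφ
      δ x₀ hδcont hδdiff hδ0 hjump (-v) s h1 h2 ?_
    intro n ε hε
    simpa [smul_neg, sub_eq_add_neg] using h3 n ε hε
  refine ⟨?_, ?_, ?_⟩
  · -- (1)
    rintro ⟨t, ht0, htlim, hor | hor⟩
    · exact ⟨_, ((keyP t ht0 htlim (fun n ε hε => hor n ε hε)).1).symm⟩
    · have heq := (keyN t ht0 htlim (fun n ε hε => hor n ε hε)).1
      refine ⟨-(fderiv ℝ Φ h (fderiv ℝ δ x₀ (-v))), ?_⟩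
      rw [map_neg, ← heq, map_neg, neg_neg]
  · -- (2)
    rintro hy0 ⟨t, ht0, htlim, hsupp⟩
    obtain ⟨heq, hsign⟩ := keyP t ht0 htlim (fun n ε hε => hsupp n ε hε)
    exact ⟨_, hsign hy0, heq.symm⟩
  · -- (3)
    rintro hy0 ⟨t, s, ht0, hs0, htlim, hslim, hst, hss⟩
    obtain ⟨heq, hsign⟩ := keyP t ht0 htlim (fun n ε hε => hst n ε hε)
    obtain ⟨heqN, hsignN⟩ := keyN s hs0 hslim (fun n ε hε => hss n ε hε)
    have h1 : 0 ≤ (fderiv ℝ Φ h (fderiv ℝ δ x₀ v)) 0 := hsign hy0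
    have h2 := hsignN hy0
    have h3 : fderiv ℝ Φ h (fderiv ℝ δ x₀ (-v)) = -(fderiv ℝ Φ h (fderiv ℝ δ x₀ v)) := by
      rw [map_neg, map_neg]
    rw [h3] at h2
    have h4 : (-(fderiv ℝ Φ h (fderiv ℝ δ x₀ v))) 0 = -((fderiv ℝ Φ h (fderiv ℝ δ x₀ v)) 0) := rfl
    rw [h4] at h2
    exact ⟨_, le_antisymm (by linarith) h1, heq.symm⟩
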